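/- Let ℓ > 0, 1 < p < ∞, γ : ℝ → ℝ continuous, strictly increasing and surjective with γ(0) = 0, f ∈ L^1(0,ℓ) and a, b ∈ ℝ. For ε ∈ ℝ, let v_ε = γ ∘ u_ε denote the weak solution of (P^{γ,f}_{p,a,b+ε}), with u_ε its C¹ representative. If ε > 0, then u_0(x) ≤ u_ε(x) for all x ∈ [0,ℓ] and u_0(ℓ) < u_ε(ℓ). If ε < 0, then u_ε(x) ≤ u_0(x) for all x ∈ [0,ℓ] and u_ε(ℓ) < u_0(ℓ). -/

import Mathlib

open MeasureTheory Set Filter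

noncomputable section

/-- A connected compact metric graph: finite nonempty vertex set, finite edge set,
initial/terminal vertex maps without loops, positive edge lengths, no multiple edges,
and connectedness via paths of edges. -/
structure MetricGraph where
  V : Type
  E : Type
  fintypeV : Fintype V
  fintypeE : Fintype E
  nonemptyV : Nonempty V
  ι : E → V
  τ : E → V
  no_loops : ∀ e, ι e ≠ τ e
  len : E → ℝ
  len_pos : ∀ e, 0 < len e
  no_multi : ∀ e e', ({ι e, τ e} : Set V) = ({ι e', τ e'} : Set V) → e = e'
  connected : ∀ v w : V,
    Relation.ReflTransGen (fun a b => ∃ e, (ι e = a ∧ τ e = b) ∨ (ι e = b ∧ τ e = a)) v w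

/-- Sum over the edges of the graph. -/
def edgeSum (G : MetricGraph) (F : G.E → ℝ) : ℝ :=
  letI := G.fintypeE
  ∑ e, F e

/-- Sum over the vertices of the graph. -/
def vertexSum (G : MetricGraph) (F : G.V → ℝ) : ℝ :=
  letI := G.fintypeV
  ∑ v, F v

/-- Number of vertices. -/
def vertexCard (G : MetricGraph) : ℕ :=
  letI := G.fintypeV
  Fintype.card G.V

/-- ρ_p(r) = |r|^(p-2) r. -/
def rho (p r : ℝ) : ℝ := |r| ^ (p - 2) * r

/-- `(u, u')` is in the Sobolev space W^{1,p}(0,ℓ): `u'` is integrable with `|u'|^p`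
integrable on (0,ℓ), and `u` is absolutely continuous on [0,ℓ] with derivative `u'`. -/
def IntervalSobolev (ℓ p : ℝ) (u u' : ℝ → ℝ) : Prop :=
  IntegrableOn u' (Ioo 0 ℓ) volume ∧
  IntegrableOn (fun x => |u' x| ^ p) (Ioo 0 ℓ) volume ∧
  ∀ x ∈ Icc (0:ℝ) ℓ, u x = u 0 + ∫ t in (0:ℝ)..x, u' t

/-- `(u, u')` is in W^{1,p̄}(G), continuous at the vertices with vertex values `uV`. -/
def GraphSobolev (G : MetricGraph) (p : G.E → ℝ) (u u' : G.E → ℝ → ℝ) (uV : G.V → ℝ) : Prop :=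
  (∀ e, IntervalSobolev (G.len e) (p e) (u e) (u' e)) ∧
  (∀ e, u e 0 = uV (G.ι e)) ∧
  (∀ e, u e (G.len e) = uV (G.τ e))

/-- `v` is a weak solution of the graph problem (P_ω^f) with data `u, u', uV`. -/
def SolvesGraphProblem (G : MetricGraph) (p : G.E → ℝ) (γ : G.E → ℝ → ℝ)
    (f : G.E → ℝ → ℝ) (ω : G.V → ℝ)
    (v : G.E → ℝ → ℝ) (u u' : G.E → ℝ → ℝ) (uV : G.V → ℝ) : Prop :=
  (∀ e, IntegrableOn (v e) (Ioo 0 (G.len e)) volume) ∧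
  GraphSobolev G p u u' uV ∧
  (∀ e, ∀ᵐ x ∂(volume.restrict (Ioo 0 (G.len e))), v e x = γ e (u e x)) ∧
  ∀ φ φ' : G.E → ℝ → ℝ, ∀ φV : G.V → ℝ, GraphSobolev G p φ φ' φV →
    edgeSum G (fun e => ∫ x in Ioo 0 (G.len e), v e x * φ e x)
      + edgeSum G (fun e => ∫ x in Ioo 0 (G.len e), rho (p e) (u' e x) * φ' e x)
    = edgeSum G (fun e => ∫ x in Ioo 0 (G.len e), f e x * φ e x)
      + vertexSum G (fun w => ω w * φV w)

/-- `v` is a weak solution of the graph problem (P_ω^f). -/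
def IsGraphWeakSolution (G : MetricGraph) (p : G.E → ℝ) (γ : G.E → ℝ → ℝ)
    (f : G.E → ℝ → ℝ) (ω : G.V → ℝ) (v : G.E → ℝ → ℝ) : Prop :=
  ∃ u u' uV, SolvesGraphProblem G p γ f ω v u u' uV

/-- `v` is a weak solution of the interval Neumann problem (P^{γ,f}_{p,a,b}),
with associated Sobolev function `u` (derivative `u'`). -/
def SolvesNeumann (ℓ p : ℝ) (γ f : ℝ → ℝ) (a b : ℝ) (v u u' : ℝ → ℝ) : Prop :=
  IntegrableOn v (Ioo 0 ℓ) volume ∧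
  IntervalSobolev ℓ p u u' ∧
  (∀ᵐ x ∂(volume.restrict (Ioo 0 ℓ)), v x = γ (u x)) ∧
  ∀ φ φ' : ℝ → ℝ, IntervalSobolev ℓ p φ φ' →
    (∫ x in Ioo 0 ℓ, v x * φ x) + (∫ x in Ioo 0 ℓ, rho p (u' x) * φ' x)
    = (∫ x in Ioo 0 ℓ, f x * φ x) + a * φ 0 + b * φ ℓ

/-- `v` is a weak solution of the interval Neumann problem (P^{γ,f}_{p,a,b}). -/
def IsNeumannWeakSolution (ℓ p : ℝ) (γ f : ℝ → ℝ) (a b : ℝ) (v : ℝ → ℝ) : Prop :=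
  ∃ u u', SolvesNeumann ℓ p γ f a b v u u'

end


section AuxLemmas
open intervalIntegral Topology ENNReal

lemma rho_zero (p : ℝ) : rho p 0 = 0 := by simp [rho]

lemma rho_nonneg {p : ℝ} {r : ℝ} (hr : 0 ≤ r) : 0 ≤ rho p r :=
  mul_nonneg (Real.rpow_nonneg (abs_nonneg r) _) hr

lemma rho_nonpos {p : ℝ} {r : ℝ} (hr : r ≤ 0) : rho p r ≤ 0 :=
  mul_nonpos_iff.mpr (Or.inl ⟨Real.rpow_nonneg (abs_nonneg r) _, hr⟩)

lemma rho_pos_eq {p r : ℝ} (hr : 0 < r) : rho p r = r ^ (p - 1) := by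
  have : r ^ (p - 2) * r = r ^ ((p-2) + 1) := (Real.rpow_add_one hr.ne' _).symm
  rw [rho, abs_of_pos hr, this]
  ring_nf

lemma rho_neg_eq {p r : ℝ} (hr : r < 0) : rho p r = -((-r) ^ (p - 1)) := by
  have h1 : (0:ℝ) < -r := by linarith
  have : (-r) ^ (p - 2) * (-r) = (-r) ^ ((p-2) + 1) := (Real.rpow_add_one h1.ne' _).symm
  rw [rho, abs_of_neg hr]
  have : (-r) ^ (p - 2) * r = -((-r) ^ ((p-2)+1)) := by
    rw [← this]; ring
  rw [this]
  ring_nf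

lemma rho_mono {p : ℝ} (hp : 1 < p) : Monotone (rho p) := by
  intro s t hst
  have hp1 : (0:ℝ) ≤ p - 1 := by linarith
  rcases le_or_gt 0 s with hs | hs
  · rcases eq_or_lt_of_le hs with h0 | h0
    · rw [← h0, rho_zero]; exact rho_nonneg (le_trans hs hst)
    · rw [rho_pos_eq h0, rho_pos_eq (lt_of_lt_of_le h0 hst)]
      exact Real.rpow_le_rpow h0.le hst hp1
  · rcases le_or_gt 0 t with ht | ht
    · exact le_trans (rho_nonpos hs.le) (rho_nonneg ht)
    · rw [rho_neg_eq hs, rho_neg_eq ht]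
      have : (-t) ^ (p-1) ≤ (-s) ^ (p-1) :=
        Real.rpow_le_rpow (by linarith) (by linarith) hp1
      linarith

lemma rho_abs {p : ℝ} (hp : 1 < p) (r : ℝ) : |rho p r| = |r| ^ (p - 1) := by
  rcases lt_trichotomy r 0 with h | h | h
  · rw [rho_neg_eq h, abs_neg, abs_of_nonneg (Real.rpow_nonneg (by linarith) _), abs_of_neg h]
  · simp [h, rho_zero, Real.zero_rpow (by linarith : p - 1 ≠ 0)]
  · rw [rho_pos_eq h, abs_of_nonneg (Real.rpow_nonneg h.le _), abs_of_pos h]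

lemma rho_continuous {p : ℝ} (hp : 1 < p) : Continuous (rho p) := by
  rw [continuous_iff_continuousAt]
  intro x
  rcases eq_or_ne x 0 with rfl | hx
  · rw [ContinuousAt, rho_zero]
    apply squeeze_zero_norm (fun t => (rho_abs hp t).le)
    have hc : Continuous (fun t : ℝ => |t| ^ (p - 1)) :=
      (Real.continuous_rpow_const (by linarith)).comp continuous_abs
    have := (hc.continuousAt (x := 0)).tendsto
    simpa [Real.zero_rpow (by linarith : p - 1 ≠ 0)] using this
  · have h1 : ContinuousAt (fun r : ℝ => |r| ^ (p - 2)) x :=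
      (continuous_abs.continuousAt).rpow_const (Or.inl (abs_ne_zero.mpr hx))
    exact h1.mul continuousAt_id

lemma eq_zero_of_nonneg_of_integral_zero {ℓ : ℝ} {h : ℝ → ℝ}
    (hc : ∀ x ∈ Ioo (0:ℝ) ℓ, ContinuousAt h x)
    (hnn : ∀ x ∈ Ioo (0:ℝ) ℓ, 0 ≤ h x)
    (hint : IntegrableOn h (Ioo 0 ℓ) volume)
    (hz : ∫ x in Ioo 0 ℓ, h x = 0) :
    ∀ x ∈ Ioo (0:ℝ) ℓ, h x = 0 := by
  have hae : h =ᵐ[volume.restrict (Ioo 0 ℓ)] 0 := by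
    refine (integral_eq_zero_iff_of_nonneg_ae ?_ hint).mp hz
    exact (ae_restrict_iff' measurableSet_Ioo).2 (Eventually.of_forall hnn)
  by_contra hcon
  push_neg at hcon
  obtain ⟨x0, hx0, hne⟩ := hcon
  have hpos : 0 < h x0 := lt_of_le_of_ne (hnn x0 hx0) (Ne.symm hne)
  have hmem : {y | 0 < h y} ∈ 𝓝 x0 := (hc x0 hx0) (Ioi_mem_nhds hpos)
  have hmem2 : {y | 0 < h y} ∩ Ioo 0 ℓ ∈ 𝓝 x0 :=
    inter_mem hmem (isOpen_Ioo.mem_nhds hx0)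
  obtain ⟨l, u, hlu, hsub⟩ := mem_nhds_iff_exists_Ioo_subset.mp hmem2
  have hnull : volume.restrict (Ioo 0 ℓ) {y | h y ≠ 0} = 0 := hae
  have hsub2 : Ioo l u ⊆ {y | h y ≠ 0} ∩ Ioo 0 ℓ := fun y hy =>
    ⟨(hsub hy).1.ne', (hsub hy).2⟩
  have h1 : volume.restrict (Ioo 0 ℓ) (Ioo l u) = 0 := by
    have : volume.restrict (Ioo 0 ℓ) (Ioo l u)
        ≤ volume.restrict (Ioo 0 ℓ) {y | h y ≠ 0} :=
      measure_mono (fun y hy => (hsub2 hy).1)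
    simpa [hnull] using this
  have h2 : volume.restrict (Ioo 0 ℓ) (Ioo l u) = volume (Ioo l u) := by
    rw [Measure.restrict_apply' measurableSet_Ioo]
    congr 1
    exact inter_eq_left.mpr (fun y hy => (hsub2 hy).2)
  have : (0:ℝ≥0∞) < volume (Ioo l u) :=
    isOpen_Ioo.measure_pos volume ⟨x0, hlu⟩
  rw [← h2, h1] at this
  exact lt_irrefl _ this

lemma ae_ne_pt (x : ℝ) : ∀ᵐ t : ℝ, t ≠ x := by
  rw [ae_iff]
  have : {a : ℝ | ¬a ≠ x} = {x} := by ext t; simp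
  rw [this]
  exact Real.volume_singleton

lemma posPart_ftc (G : ℝ → ℝ) (hG : Continuous G) (W : ℝ → ℝ) (c : ℝ)
    (hW : ∀ x, W x = c + ∫ t in (0:ℝ)..x, G t) :
    ∀ x : ℝ, max (W x) 0 = max (W 0) 0 + ∫ t in (0:ℝ)..x,
      (if 0 < W t then G t else 0) := by
  have hGi : ∀ a b : ℝ, IntervalIntegrable G volume a b := fun a b =>
    hG.intervalIntegrable a b
  have hWc : Continuous W := by
    have : Continuous fun x => c + ∫ t in (0:ℝ)..x, G t :=
      continuous_const.add (continuous_primitive hGi 0)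
    exact this.congr (fun x => (hW x).symm)
  set ψ : ℝ → ℝ := fun t => if 0 < W t then G t else 0 with hψdef
  have hψmeas : Measurable ψ :=
    Measurable.ite ((isOpen_lt continuous_const hWc).measurableSet)
      hG.measurable measurable_const
  have hψle : ∀ t, ‖ψ t‖ ≤ ‖G t‖ := by
    intro t
    by_cases h : 0 < W t <;> simp [hψdef, h]
  have hψint : ∀ a b : ℝ, IntervalIntegrable ψ volume a b := fun a b =>
    (hGi a b).mono_fun hψmeas.aestronglyMeasurable.restrict (Eventually.of_forall hψle)
  set F : ℝ → ℝ := fun x => ∫ t in (0:ℝ)..x, ψ t with hFdef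
  have hFadd : ∀ x y : ℝ, F y - F x = ∫ t in x..y, ψ t := by
    intro x y
    have := integral_add_adjacent_intervals (hψint 0 x) (hψint x y)
    simp only [hFdef]
    linarith
  have hWadd : ∀ x y : ℝ, W y - W x = ∫ t in x..y, G t := by
    intro x y
    have := integral_add_adjacent_intervals (hGi 0 x) (hGi x y)
    rw [hW x, hW y]
    linarith
  set H : ℝ → ℝ := fun x => max (W x) 0 - F x with hHdef
  have key : ∀ x : ℝ, HasDerivAt H 0 x := by
    intro x
    rcases lt_trichotomy (W x) 0 with hx | hx | hx
    · -- W x < 0 : locally constant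
      have hmem : {y | W y < 0} ∈ 𝓝 x := (hWc.continuousAt) (Iio_mem_nhds hx)
      obtain ⟨l, u, hlu, hsub⟩ := mem_nhds_iff_exists_Ioo_subset.mp hmem
      have hloc : ∀ᶠ y in 𝓝 x, H y = H x := by
        filter_upwards [Ioo_mem_nhds hlu.1 hlu.2] with y hy
        have h0 : ∫ t in x..y, ψ t = 0 := by
          rw [integral_congr (g := fun _ => (0:ℝ)) (fun t ht => by
            have htm : t ∈ Ioo l u := Set.ordConnected_Ioo.uIcc_subset hlu hy ht
            have hWt : W t < 0 := hsub htm
            simp only [hψdef]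
            rw [if_neg (not_lt.mpr hWt.le)])]
          simp
        have hF := hFadd x y
        rw [h0] at hF
        have hWy : W y < 0 := hsub hy
        have hWx : W x < 0 := hsub hlu
        simp only [hHdef]
        rw [max_eq_right hWy.le, max_eq_right hWx.le]
        linarith
      exact (hasDerivAt_const x (H x)).congr_of_eventuallyEq hloc
    · -- W x = 0
      rcases lt_trichotomy (G x) 0 with hg | hg | hg
      · -- G x < 0 : downward crossing
        have hmem : {y | G y < 0} ∈ 𝓝 x := (hG.continuousAt) (Iio_mem_nhds hg)
        obtain ⟨l, u, hlu, hsub⟩ := mem_nhds_iff_exists_Ioo_subset.mp hmem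
        have hWgt : ∀ y ∈ Ioo l u, x < y → W y < 0 := by
          intro y hy hxy
          have hIpos : 0 < ∫ t in x..y, -G t := by
            apply intervalIntegral_pos_of_pos_on ((hG.neg).intervalIntegrable x y)
            · intro t ht
              have htm : t ∈ Ioo l u := ⟨lt_trans hlu.1 ht.1, lt_trans ht.2 hy.2⟩
              simpa using hsub htm
            · exact hxy
          rw [intervalIntegral.integral_neg] at hIpos
          have := hWadd x y
          rw [hx] at this
          linarith
        have hWlt : ∀ y ∈ Ioo l u, y < x → 0 < W y := by
          intro y hy hyx
          have hIpos : 0 < ∫ t in y..x, -G t := by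
            apply intervalIntegral_pos_of_pos_on ((hG.neg).intervalIntegrable y x)
            · intro t ht
              have htm : t ∈ Ioo l u := ⟨lt_trans hy.1 ht.1, lt_trans ht.2 hlu.2⟩
              simpa using hsub htm
            · exact hyx
          rw [intervalIntegral.integral_neg] at hIpos
          have := hWadd y x
          rw [hx] at this
          linarith
        have hloc : ∀ᶠ y in 𝓝 x, H y = H x := by
          filter_upwards [Ioo_mem_nhds hlu.1 hlu.2] with y hy
          rcases lt_trichotomy x y with hxy | rfl | hyx
          · -- right of x : ψ vanishes on [x,y]
            have h0 : ∫ t in x..y, ψ t = 0 := by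
              rw [integral_congr (g := fun _ => (0:ℝ)) ?_]
              · simp
              intro t ht
              rw [uIcc_of_le hxy.le] at ht
              simp only [hψdef]
              rcases eq_or_lt_of_le ht.1 with rfl | hxt
              · rw [if_neg (not_lt.mpr hx.le)]
              · have htm : t ∈ Ioo l u := ⟨lt_trans hlu.1 hxt, lt_of_le_of_lt ht.2 hy.2⟩
                rw [if_neg (not_lt.mpr (hWgt t htm hxt).le)]
            have hF := hFadd x y
            rw [h0] at hF
            have hWy : W y < 0 := hWgt y hy hxy
            simp only [hHdef]
            rw [max_eq_right hWy.le, max_eq_right hx.le]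
            linarith
          · rfl
          · -- left of x : ψ = G off {x} on [y,x]
            have h0 : ∫ t in y..x, ψ t = ∫ t in y..x, G t := by
              apply intervalIntegral.integral_congr_ae
              filter_upwards [ae_ne_pt x] with t htx ht
              rw [uIoc_of_le hyx.le] at ht
              have htx' : t < x := lt_of_le_of_ne ht.2 htx
              have htm : t ∈ Ioo l u := ⟨lt_trans hy.1 ht.1, lt_trans htx' hlu.2⟩
              simp only [hψdef]
              rw [if_pos (hWlt t htm htx')]
            have hF := hFadd y x
            rw [h0, ← hWadd y x] at hF
            have hWy : 0 < W y := hWlt y hy hyx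
            simp only [hHdef]
            rw [max_eq_left hWy.le, max_eq_right hx.le]
            linarith
        exact (hasDerivAt_const x (H x)).congr_of_eventuallyEq hloc
      · -- G x = 0 : little-o estimate
        rw [hasDerivAt_iff_isLittleO, Asymptotics.isLittleO_iff]
        intro ε hε
        have hev : ∀ᶠ t in 𝓝 x, ‖G t‖ < ε / 2 := by
          have hcont := hG.continuousAt (x := x)
          rw [ContinuousAt, hg] at hcont
          have := hcont (Metric.ball_mem_nhds 0 (by positivity : (0:ℝ) < ε/2))
          filter_upwards [this] with t ht
          simpa [Real.norm_eq_abs] using ht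
        obtain ⟨l, u, hlu, hsub⟩ := mem_nhds_iff_exists_Ioo_subset.mp hev
        filter_upwards [Ioo_mem_nhds hlu.1 hlu.2] with y hy
        have hIsub : Set.uIoc x y ⊆ Ioo l u := by
          intro t ht
          rcases ht with ht
          constructor
          · exact lt_of_lt_of_le (lt_min hlu.1 hy.1) ht.1.le
          · exact lt_of_le_of_lt ht.2 (max_lt hlu.2 hy.2)
        have hWb : ‖W y - W x‖ ≤ ε / 2 * ‖y - x‖ := by
          rw [hWadd x y]
          have := norm_integral_le_of_norm_le_const
            (f := G) (a := x) (b := y) (C := ε/2)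
            (fun t ht => (hsub (hIsub ht)).le)
          simpa [Real.norm_eq_abs] using this
        have hFb : ‖F y - F x‖ ≤ ε / 2 * ‖y - x‖ := by
          rw [hFadd x y]
          have := norm_integral_le_of_norm_le_const
            (f := ψ) (a := x) (b := y) (C := ε/2)
            (fun t ht => le_trans (hψle t) (hsub (hIsub ht)).le)
          simpa [Real.norm_eq_abs] using this
        have hmax : ‖max (W y) 0 - max (W x) 0‖ ≤ ‖W y - W x‖ := by
          simpa [Real.norm_eq_abs] using abs_max_sub_max_le_abs (W y) (W x) 0
        simp only [hHdef, smul_zero, sub_zero]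
        have : ‖(max (W y) 0 - F y) - (max (W x) 0 - F x)‖
            ≤ ‖max (W y) 0 - max (W x) 0‖ + ‖F y - F x‖ := by
          have := norm_sub_le (max (W y) 0 - max (W x) 0) (F y - F x)
          have e : (max (W y) 0 - F y) - (max (W x) 0 - F x)
              = (max (W y) 0 - max (W x) 0) - (F y - F x) := by ring
          rw [e]; exact this
        calc ‖(max (W y) 0 - F y) - (max (W x) 0 - F x)‖
            ≤ ‖max (W y) 0 - max (W x) 0‖ + ‖F y - F x‖ := this
          _ ≤ ε / 2 * ‖y - x‖ + ε / 2 * ‖y - x‖ :=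
              add_le_add (le_trans hmax hWb) hFb
          _ = ε * ‖y - x‖ := by ring
      · -- G x > 0 : upward crossing
        have hmem : {y | 0 < G y} ∈ 𝓝 x := (hG.continuousAt) (Ioi_mem_nhds hg)
        obtain ⟨l, u, hlu, hsub⟩ := mem_nhds_iff_exists_Ioo_subset.mp hmem
        have hWgt : ∀ y ∈ Ioo l u, x < y → 0 < W y := by
          intro y hy hxy
          have hIpos : 0 < ∫ t in x..y, G t := by
            apply intervalIntegral_pos_of_pos_on (hGi x y)
            · intro t ht
              exact hsub ⟨lt_trans hlu.1 ht.1, lt_trans ht.2 hy.2⟩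
            · exact hxy
          have := hWadd x y
          rw [hx] at this
          linarith
        have hWlt : ∀ y ∈ Ioo l u, y < x → W y < 0 := by
          intro y hy hyx
          have hIpos : 0 < ∫ t in y..x, G t := by
            apply intervalIntegral_pos_of_pos_on (hGi y x)
            · intro t ht
              exact hsub ⟨lt_trans hy.1 ht.1, lt_trans ht.2 hlu.2⟩
            · exact hyx
          have := hWadd y x
          rw [hx] at this
          linarith
        have hloc : ∀ᶠ y in 𝓝 x, H y = H x := by
          filter_upwards [Ioo_mem_nhds hlu.1 hlu.2] with y hy
          rcases lt_trichotomy x y with hxy | rfl | hyx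
          · -- right of x : ψ = G off {x} on [x,y]
            have h0 : ∫ t in x..y, ψ t = ∫ t in x..y, G t := by
              apply intervalIntegral.integral_congr_ae
              filter_upwards [ae_ne_pt x] with t htx ht
              rw [uIoc_of_le hxy.le] at ht
              have htm : t ∈ Ioo l u := ⟨lt_trans hlu.1 ht.1, lt_of_le_of_lt ht.2 hy.2⟩
              simp only [hψdef]
              rw [if_pos (hWgt t htm ht.1)]
            have hF := hFadd x y
            rw [h0, ← hWadd x y] at hF
            have hWy : 0 < W y := hWgt y hy hxy
            simp only [hHdef]
            rw [max_eq_left hWy.le, max_eq_right hx.le]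
            linarith
          · rfl
          · -- left of x : ψ vanishes on [y,x]
            have h0 : ∫ t in y..x, ψ t = 0 := by
              rw [integral_congr (g := fun _ => (0:ℝ)) ?_]
              · simp
              intro t ht
              rw [uIcc_of_le hyx.le] at ht
              simp only [hψdef]
              rcases eq_or_lt_of_le ht.2 with rfl | htx
              · rw [if_neg (not_lt.mpr hx.le)]
              · have htm : t ∈ Ioo l u := ⟨lt_of_lt_of_le hy.1 ht.1, lt_trans htx hlu.2⟩
                rw [if_neg (not_lt.mpr (hWlt t htm htx).le)]
            have hF := hFadd y x
            rw [h0] at hF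
            have hWy : W y < 0 := hWlt y hy hyx
            simp only [hHdef]
            rw [max_eq_right hWy.le, max_eq_right hx.le]
            linarith
        exact (hasDerivAt_const x (H x)).congr_of_eventuallyEq hloc
    · -- W x > 0 : locally W > 0
      have hmem : {y | 0 < W y} ∈ 𝓝 x := (hWc.continuousAt) (Ioi_mem_nhds hx)
      obtain ⟨l, u, hlu, hsub⟩ := mem_nhds_iff_exists_Ioo_subset.mp hmem
      have hloc : ∀ᶠ y in 𝓝 x, H y = H x := by
        filter_upwards [Ioo_mem_nhds hlu.1 hlu.2] with y hy
        have h0 : ∫ t in x..y, ψ t = ∫ t in x..y, G t := by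
          apply integral_congr
          intro t ht
          have htm : t ∈ Ioo l u := Set.ordConnected_Ioo.uIcc_subset hlu hy ht
          simp only [hψdef]
          rw [if_pos (show 0 < W t from hsub htm)]
        have hF := hFadd x y
        rw [h0, ← hWadd x y] at hF
        simp only [hHdef]
        rw [max_eq_left (hsub hy).le, max_eq_left (hsub hlu).le]
        linarith
      exact (hasDerivAt_const x (H x)).congr_of_eventuallyEq hloc
  have hdiff : Differentiable ℝ H := fun x => (key x).differentiableAt
  intro x
  have hconst : H x = H 0 := is_const_of_deriv_eq_zero hdiff (fun y => (key y).deriv) x 0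
  have hF0 : F 0 = 0 := by simp [hFdef]
  simp only [hHdef] at hconst
  rw [hF0] at hconst
  linarith

end AuxLemmas

section KeyLemma
open intervalIntegral Topology ENNReal

set_option maxHeartbeats 2000000 in
lemma neumann_compare (ℓ p : ℝ) (hℓ : 0 < ℓ) (hp : 1 < p)
    (γ : ℝ → ℝ) (hγc : Continuous γ) (hγm : StrictMono γ)
    (f : ℝ → ℝ) (a b1 b2 : ℝ) (hb : b1 < b2)
    (u1 u1' u2 u2' : ℝ → ℝ)
    (h1 : SolvesNeumann ℓ p γ f a b1 (fun x => γ (u1 x)) u1 u1')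
    (h2 : SolvesNeumann ℓ p γ f a b2 (fun x => γ (u2 x)) u2 u2')
    (hc1 : ContinuousOn u1' (Icc 0 ℓ)) (hc2 : ContinuousOn u2' (Icc 0 ℓ)) :
    (∀ x ∈ Icc (0:ℝ) ℓ, u1 x ≤ u2 x) ∧ u1 ℓ < u2 ℓ := by
  obtain ⟨-, ⟨hi1, hip1, ftc1⟩, -, hw1⟩ := h1
  obtain ⟨-, ⟨hi2, hip2, ftc2⟩, -, hw2⟩ := h2
  have hp0 : (0:ℝ) ≤ p := by linarith
  -- projection onto [0, ℓ]
  set π : ℝ → ℝ := fun t => max 0 (min t ℓ) with hπdef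
  have hπc : Continuous π := continuous_const.max (continuous_id.min continuous_const)
  have hπmem : ∀ t, π t ∈ Icc (0:ℝ) ℓ := fun t =>
    ⟨le_max_left _ _, max_le hℓ.le (min_le_right _ _)⟩
  have hπid : ∀ t ∈ Icc (0:ℝ) ℓ, π t = t := fun t ht => by
    simp only [hπdef]
    rw [min_eq_left ht.2, max_eq_right ht.1]
  -- globalized derivatives and primitives
  set g1 : ℝ → ℝ := fun t => u1' (π t) with hg1def
  set g2 : ℝ → ℝ := fun t => u2' (π t) with hg2def
  have hg1c : Continuous g1 := hc1.comp_continuous hπc hπmem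
  have hg2c : Continuous g2 := hc2.comp_continuous hπc hπmem
  have hg1eq : ∀ t ∈ Icc (0:ℝ) ℓ, g1 t = u1' t := fun t ht => by
    simp only [hg1def]; rw [hπid t ht]
  have hg2eq : ∀ t ∈ Icc (0:ℝ) ℓ, g2 t = u2' t := fun t ht => by
    simp only [hg2def]; rw [hπid t ht]
  set G : ℝ → ℝ := fun t => g1 t - g2 t with hGdef
  have hGc : Continuous G := hg1c.sub hg2c
  have hGeq : ∀ t ∈ Icc (0:ℝ) ℓ, G t = u1' t - u2' t := fun t ht => by
    simp only [hGdef]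
    rw [hg1eq t ht, hg2eq t ht]
  set U1 : ℝ → ℝ := fun x => u1 0 + ∫ t in (0:ℝ)..x, g1 t with hU1def
  set U2 : ℝ → ℝ := fun x => u2 0 + ∫ t in (0:ℝ)..x, g2 t with hU2def
  have hU1c : Continuous U1 :=
    continuous_const.add (continuous_primitive (fun a b => hg1c.intervalIntegrable a b) 0)
  have hU2c : Continuous U2 :=
    continuous_const.add (continuous_primitive (fun a b => hg2c.intervalIntegrable a b) 0)
  have hU1eq : ∀ x ∈ Icc (0:ℝ) ℓ, U1 x = u1 x := by
    intro x hx
    rw [ftc1 x hx]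
    simp only [hU1def]
    congr 1
    apply integral_congr
    intro t ht
    rw [uIcc_of_le hx.1] at ht
    exact hg1eq t ⟨ht.1, le_trans ht.2 hx.2⟩
  have hU2eq : ∀ x ∈ Icc (0:ℝ) ℓ, U2 x = u2 x := by
    intro x hx
    rw [ftc2 x hx]
    simp only [hU2def]
    congr 1
    apply integral_congr
    intro t ht
    rw [uIcc_of_le hx.1] at ht
    exact hg2eq t ⟨ht.1, le_trans ht.2 hx.2⟩
  set W : ℝ → ℝ := fun x => U1 x - U2 x with hWdef
  have hWc : Continuous W := hU1c.sub hU2c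
  have hWrep : ∀ x, W x = (u1 0 - u2 0) + ∫ t in (0:ℝ)..x, G t := by
    intro x
    simp only [hWdef, hU1def, hU2def, hGdef]
    rw [integral_sub (hg1c.intervalIntegrable 0 x) (hg2c.intervalIntegrable 0 x)]
    ring
  have hWeq : ∀ x ∈ Icc (0:ℝ) ℓ, W x = u1 x - u2 x := fun x hx => by
    simp only [hWdef]; rw [hU1eq x hx, hU2eq x hx]
  have hu1cOn : ContinuousOn u1 (Icc 0 ℓ) :=
    hU1c.continuousOn.congr (fun x hx => (hU1eq x hx).symm)
  have hu2cOn : ContinuousOn u2 (Icc 0 ℓ) :=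
    hU2c.continuousOn.congr (fun x hx => (hU2eq x hx).symm)
  -- the positive-part test function
  have hppf := posPart_ftc G hGc W (u1 0 - u2 0) hWrep
  set ψ : ℝ → ℝ := fun t => if 0 < W t then G t else 0 with hψdef
  have hψmeas : Measurable ψ :=
    Measurable.ite ((isOpen_lt continuous_const hWc).measurableSet)
      hGc.measurable measurable_const
  have hψle : ∀ t, ‖ψ t‖ ≤ ‖G t‖ := by
    intro t
    by_cases h : 0 < W t <;> simp [hψdef, h]
  -- bounds and integrability helpers
  have hIoosub : Ioo (0:ℝ) ℓ ⊆ Icc 0 ℓ := Ioo_subset_Icc_self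
  have hvol : volume (Ioo (0:ℝ) ℓ) ≠ ⊤ := measure_Ioo_lt_top.ne
  have intcomp : ∀ h : ℝ → ℝ, ContinuousOn h (Icc 0 ℓ) → IntegrableOn h (Ioo 0 ℓ) volume :=
    fun h hh =>
      (hh.integrableOn_compact' isCompact_Icc measurableSet_Icc).mono_set hIoosub
  obtain ⟨MG, hMG⟩ := isCompact_Icc.exists_bound_of_continuousOn hGc.continuousOn
  have h0mem : (0:ℝ) ∈ Icc (0:ℝ) ℓ := left_mem_Icc.mpr hℓ.le
  have hℓmem : ℓ ∈ Icc (0:ℝ) ℓ := right_mem_Icc.mpr hℓ.le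
  have hMG0 : 0 ≤ MG := le_trans (norm_nonneg _) (hMG 0 h0mem)
  have hψbdd : ∀ x ∈ Ioo (0:ℝ) ℓ, ‖ψ x‖ ≤ MG := fun x hx =>
    le_trans (hψle x) (hMG x (hIoosub hx))
  have hψint : IntegrableOn ψ (Ioo 0 ℓ) volume := by
    apply Measure.integrableOn_of_bounded hvol hψmeas.aestronglyMeasurable
    filter_upwards [ae_restrict_mem measurableSet_Ioo] with x hx
    exact hψbdd x hx
  have hψpint : IntegrableOn (fun x => |ψ x| ^ p) (Ioo 0 ℓ) volume := by
    apply Measure.integrableOn_of_bounded (M := MG ^ p) hvol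
    · exact ((Real.continuous_rpow_const hp0).measurable.comp
        hψmeas.abs).aestronglyMeasurable
    · filter_upwards [ae_restrict_mem measurableSet_Ioo] with x hx
      rw [Real.norm_eq_abs, abs_of_nonneg (Real.rpow_nonneg (abs_nonneg _) _)]
      apply Real.rpow_le_rpow (abs_nonneg _) _ hp0
      simpa [Real.norm_eq_abs] using hψbdd x hx
  have hφsob : IntervalSobolev ℓ p (fun x => max (W x) 0) ψ :=
    ⟨hψint, hψpint, fun x _ => hppf x⟩
  -- continuity of various integrands
  have hγu1 : ContinuousOn (fun x => γ (u1 x)) (Icc 0 ℓ) := hγc.comp_continuousOn hu1cOn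
  have hγu2 : ContinuousOn (fun x => γ (u2 x)) (Icc 0 ℓ) := hγc.comp_continuousOn hu2cOn
  have hmaxc : ContinuousOn (fun x => max (W x) 0) (Icc 0 ℓ) :=
    (hWc.max continuous_const).continuousOn
  have hρ1 : ContinuousOn (fun x => rho p (u1' x)) (Icc 0 ℓ) :=
    (rho_continuous hp).comp_continuousOn hc1
  have hρ2 : ContinuousOn (fun x => rho p (u2' x)) (Icc 0 ℓ) :=
    (rho_continuous hp).comp_continuousOn hc2
  obtain ⟨M1, hM1⟩ := isCompact_Icc.exists_bound_of_continuousOn hρ1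
  obtain ⟨M2, hM2⟩ := isCompact_Icc.exists_bound_of_continuousOn hρ2
  -- integrability of products with ψ
  have hρψint : ∀ (r : ℝ → ℝ) (M : ℝ), ContinuousOn r (Icc 0 ℓ) →
      (∀ x ∈ Icc (0:ℝ) ℓ, ‖r x‖ ≤ M) →
      IntegrableOn (fun x => r x * ψ x) (Ioo 0 ℓ) volume := by
    intro r M hr hM
    refine ⟨((hr.mono hIoosub).aestronglyMeasurable measurableSet_Ioo).mul
        hψmeas.aestronglyMeasurable.restrict, ?_⟩
    apply HasFiniteIntegral.restrict_of_bounded (C := M * MG) measure_Ioo_lt_top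
    filter_upwards [ae_restrict_mem measurableSet_Ioo] with x hx
    rw [norm_mul]
    exact mul_le_mul (hM x (hIoosub hx)) (hψbdd x hx) (norm_nonneg _)
      (le_trans (norm_nonneg _) (hM 0 h0mem))
  have ib1 : IntegrableOn (fun x => rho p (u1' x) * ψ x) (Ioo 0 ℓ) volume :=
    hρψint _ M1 hρ1 hM1
  have ib2 : IntegrableOn (fun x => rho p (u2' x) * ψ x) (Ioo 0 ℓ) volume :=
    hρψint _ M2 hρ2 hM2
  have ia1 : IntegrableOn (fun x => γ (u1 x) * max (W x) 0) (Ioo 0 ℓ) volume :=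
    intcomp _ (hγu1.mul hmaxc)
  have ia2 : IntegrableOn (fun x => γ (u2 x) * max (W x) 0) (Ioo 0 ℓ) volume :=
    intcomp _ (hγu2.mul hmaxc)
  -- weak identity for the positive part test
  have E1 := hw1 _ _ hφsob
  have E2 := hw2 _ _ hφsob
  simp only [] at E1 E2
  have hA : ∫ x in Ioo (0:ℝ) ℓ, (γ (u2 x) - γ (u1 x)) * max (W x) 0
      = (∫ x in Ioo (0:ℝ) ℓ, γ (u2 x) * max (W x) 0)
        - ∫ x in Ioo (0:ℝ) ℓ, γ (u1 x) * max (W x) 0 := by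
    rw [← integral_sub ia2 ia1]
    simp only [sub_mul]
  have hB : ∫ x in Ioo (0:ℝ) ℓ, (rho p (u2' x) - rho p (u1' x)) * ψ x
      = (∫ x in Ioo (0:ℝ) ℓ, rho p (u2' x) * ψ x)
        - ∫ x in Ioo (0:ℝ) ℓ, rho p (u1' x) * ψ x := by
    rw [← integral_sub ib2 ib1]
    simp only [sub_mul]
  have key1 : (∫ x in Ioo (0:ℝ) ℓ, (γ (u2 x) - γ (u1 x)) * max (W x) 0)
      + (∫ x in Ioo (0:ℝ) ℓ, (rho p (u2' x) - rho p (u1' x)) * ψ x)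
      = (b2 - b1) * max (W ℓ) 0 := by
    rw [hA, hB]
    linear_combination E2 - E1
  -- signs
  have hXle : ∫ x in Ioo (0:ℝ) ℓ, (γ (u2 x) - γ (u1 x)) * max (W x) 0 ≤ 0 := by
    apply setIntegral_nonpos measurableSet_Ioo
    intro x hx
    rcases lt_or_ge 0 (W x) with h | h
    · have hW := hWeq x (hIoosub hx)
      have h21 : u2 x < u1 x := by rw [hW] at h; linarith
      have hγlt : γ (u2 x) - γ (u1 x) < 0 := sub_neg.mpr (hγm h21)
      exact mul_nonpos_iff.mpr (Or.inr ⟨hγlt.le, le_max_right _ _⟩)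
    · rw [max_eq_right h, mul_zero]
  have hYle : ∫ x in Ioo (0:ℝ) ℓ, (rho p (u2' x) - rho p (u1' x)) * ψ x ≤ 0 := by
    apply setIntegral_nonpos measurableSet_Ioo
    intro x hx
    simp only [hψdef]
    rcases lt_or_ge 0 (W x) with h | h
    · rw [if_pos h, hGeq x (hIoosub hx)]
      rcases le_total (u1' x) (u2' x) with hd | hd
      · exact mul_nonpos_iff.mpr
          (Or.inl ⟨sub_nonneg.mpr (rho_mono hp hd), sub_nonpos.mpr hd⟩)
      · exact mul_nonpos_iff.mpr
          (Or.inr ⟨sub_nonpos.mpr (rho_mono hp hd), sub_nonneg.mpr hd⟩)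
    · rw [if_neg (not_lt.mpr h), mul_zero]
  -- conclusion: W ℓ ≤ 0 and the first integral vanishes
  have hφℓ : max (W ℓ) 0 = 0 := by
    by_contra hne
    have hpos : 0 < max (W ℓ) 0 := lt_of_le_of_ne (le_max_right _ _) (Ne.symm hne)
    nlinarith
  have hX0 : ∫ x in Ioo (0:ℝ) ℓ, (γ (u2 x) - γ (u1 x)) * max (W x) 0 = 0 := by
    rw [hφℓ, mul_zero] at key1
    linarith
  have hcontX : ContinuousOn (fun x => (γ (u2 x) - γ (u1 x)) * max (W x) 0) (Icc 0 ℓ) :=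
    (hγu2.sub hγu1).mul hmaxc
  have hzero := eq_zero_of_nonneg_of_integral_zero
    (h := fun x => -((γ (u2 x) - γ (u1 x)) * max (W x) 0))
    (fun x hx => ((hcontX.continuousAt (Icc_mem_nhds hx.1 hx.2)).neg))
    (fun x hx => by
      rcases lt_or_ge 0 (W x) with h | h
      · have hW := hWeq x (hIoosub hx)
        have h21 : u2 x < u1 x := by rw [hW] at h; linarith
        have hγlt : γ (u2 x) - γ (u1 x) < 0 := sub_neg.mpr (hγm h21)
        have : (γ (u2 x) - γ (u1 x)) * max (W x) 0 ≤ 0 :=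
          mul_nonpos_iff.mpr (Or.inr ⟨hγlt.le, le_max_right _ _⟩)
        linarith
      · rw [max_eq_right h, mul_zero, neg_zero])
    ((intcomp _ hcontX).neg)
    (by
      rw [MeasureTheory.integral_neg, hX0, neg_zero])
  have hWle : ∀ x ∈ Ioo (0:ℝ) ℓ, W x ≤ 0 := by
    intro x hx
    by_contra hcon
    push_neg at hcon
    have hW := hWeq x (hIoosub hx)
    have h21 : u2 x < u1 x := by rw [hW] at hcon; linarith
    have hγlt : γ (u2 x) - γ (u1 x) < 0 := sub_neg.mpr (hγm h21)
    have hmax : 0 < max (W x) 0 := by rw [max_eq_left hcon.le]; exact hcon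
    have hzx := hzero x hx
    have := mul_neg_of_neg_of_pos hγlt hmax
    linarith
  have hWIcc : ∀ x ∈ Icc (0:ℝ) ℓ, W x ≤ 0 := by
    have hsubset : closure (Ioo (0:ℝ) ℓ) ⊆ {y | W y ≤ 0} :=
      closure_minimal hWle (isClosed_le hWc continuous_const)
    intro x hx
    apply hsubset
    rw [closure_Ioo hℓ.ne]
    exact hx
  have hle : ∀ x ∈ Icc (0:ℝ) ℓ, u1 x ≤ u2 x := by
    intro x hx
    have := hWIcc x hx
    rw [hWeq x hx] at this
    linarith
  refine ⟨hle, ?_⟩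
  -- strict inequality at the right endpoint
  rcases lt_or_eq_of_le (hle ℓ hℓmem) with h | heq
  · exact h
  exfalso
  -- second test function: U2 - U1
  have hφ2sob : IntervalSobolev ℓ p (fun x => U2 x - U1 x) (fun t => g2 t - g1 t) := by
    refine ⟨intcomp _ (hg2c.sub hg1c).continuousOn, ?_, ?_⟩
    · exact intcomp _ (((Real.continuous_rpow_const hp0).comp
        (hg2c.sub hg1c).abs).continuousOn)
    · intro x hx
      dsimp only
      simp only [hU1def, hU2def]
      rw [integral_sub (hg2c.intervalIntegrable 0 x) (hg1c.intervalIntegrable 0 x)]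
      simp only [intervalIntegral.integral_same]
      ring
  have ia1' : IntegrableOn (fun x => γ (u1 x) * (U2 x - U1 x)) (Ioo 0 ℓ) volume :=
    intcomp _ (hγu1.mul (hU2c.sub hU1c).continuousOn)
  have ia2' : IntegrableOn (fun x => γ (u2 x) * (U2 x - U1 x)) (Ioo 0 ℓ) volume :=
    intcomp _ (hγu2.mul (hU2c.sub hU1c).continuousOn)
  have ib1' : IntegrableOn (fun x => rho p (u1' x) * (g2 x - g1 x)) (Ioo 0 ℓ) volume :=
    intcomp _ (hρ1.mul (hg2c.sub hg1c).continuousOn)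
  have ib2' : IntegrableOn (fun x => rho p (u2' x) * (g2 x - g1 x)) (Ioo 0 ℓ) volume :=
    intcomp _ (hρ2.mul (hg2c.sub hg1c).continuousOn)
  have E1' := hw1 _ _ hφ2sob
  have E2' := hw2 _ _ hφ2sob
  simp only [] at E1' E2'
  have hA' : ∫ x in Ioo (0:ℝ) ℓ, (γ (u2 x) - γ (u1 x)) * (U2 x - U1 x)
      = (∫ x in Ioo (0:ℝ) ℓ, γ (u2 x) * (U2 x - U1 x))
        - ∫ x in Ioo (0:ℝ) ℓ, γ (u1 x) * (U2 x - U1 x) := by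
    rw [← integral_sub ia2' ia1']
    simp only [sub_mul]
  have hB' : ∫ x in Ioo (0:ℝ) ℓ, (rho p (u2' x) - rho p (u1' x)) * (g2 x - g1 x)
      = (∫ x in Ioo (0:ℝ) ℓ, rho p (u2' x) * (g2 x - g1 x))
        - ∫ x in Ioo (0:ℝ) ℓ, rho p (u1' x) * (g2 x - g1 x) := by
    rw [← integral_sub ib2' ib1']
    simp only [sub_mul]
  have hUℓ : U2 ℓ - U1 ℓ = 0 := by
    rw [hU1eq ℓ hℓmem, hU2eq ℓ hℓmem, ← heq]
    ring
  have key2 : (∫ x in Ioo (0:ℝ) ℓ, (γ (u2 x) - γ (u1 x)) * (U2 x - U1 x))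
      + (∫ x in Ioo (0:ℝ) ℓ, (rho p (u2' x) - rho p (u1' x)) * (g2 x - g1 x))
      = 0 := by
    rw [hA', hB']
    linear_combination E2' - E1' + (b2 - b1) * hUℓ
  have hXge : 0 ≤ ∫ x in Ioo (0:ℝ) ℓ, (γ (u2 x) - γ (u1 x)) * (U2 x - U1 x) := by
    apply setIntegral_nonneg measurableSet_Ioo
    intro x hx
    have e1 := hU1eq x (hIoosub hx)
    have e2 := hU2eq x (hIoosub hx)
    rw [e1, e2]
    rcases le_total (u1 x) (u2 x) with hd | hd
    · exact mul_nonneg (sub_nonneg.mpr (hγm.monotone hd)) (sub_nonneg.mpr hd)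
    · exact mul_nonneg_iff.mpr
        (Or.inr ⟨sub_nonpos.mpr (hγm.monotone hd), sub_nonpos.mpr hd⟩)
  have hYge : 0 ≤ ∫ x in Ioo (0:ℝ) ℓ, (rho p (u2' x) - rho p (u1' x)) * (g2 x - g1 x) := by
    apply setIntegral_nonneg measurableSet_Ioo
    intro x hx
    have e1 := hg1eq x (hIoosub hx)
    have e2 := hg2eq x (hIoosub hx)
    rw [e1, e2]
    rcases le_total (u1' x) (u2' x) with hd | hd
    · exact mul_nonneg (sub_nonneg.mpr (rho_mono hp hd)) (sub_nonneg.mpr hd)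
    · exact mul_nonneg_iff.mpr
        (Or.inr ⟨sub_nonpos.mpr (rho_mono hp hd), sub_nonpos.mpr hd⟩)
  have hX0' : ∫ x in Ioo (0:ℝ) ℓ, (γ (u2 x) - γ (u1 x)) * (U2 x - U1 x) = 0 := by
    linarith
  have hcontX' : ContinuousOn (fun x => (γ (u2 x) - γ (u1 x)) * (U2 x - U1 x)) (Icc 0 ℓ) :=
    (hγu2.sub hγu1).mul (hU2c.sub hU1c).continuousOn
  have hzero' := eq_zero_of_nonneg_of_integral_zero
    (h := fun x => (γ (u2 x) - γ (u1 x)) * (U2 x - U1 x))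
    (fun x hx => hcontX'.continuousAt (Icc_mem_nhds hx.1 hx.2))
    (fun x hx => by
      have e1 := hU1eq x (hIoosub hx)
      have e2 := hU2eq x (hIoosub hx)
      rw [e1, e2]
      rcases le_total (u1 x) (u2 x) with hd | hd
      · exact mul_nonneg (sub_nonneg.mpr (hγm.monotone hd)) (sub_nonneg.mpr hd)
      · exact mul_nonneg_iff.mpr
          (Or.inr ⟨sub_nonpos.mpr (hγm.monotone hd), sub_nonpos.mpr hd⟩))
    (intcomp _ hcontX')
    hX0'
  have hueq : ∀ x ∈ Ioo (0:ℝ) ℓ, u1 x = u2 x := by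
    intro x hx
    have hz := hzero' x hx
    have e1 := hU1eq x (hIoosub hx)
    have e2 := hU2eq x (hIoosub hx)
    rw [e1, e2] at hz
    by_contra hne
    rcases lt_or_gt_of_ne hne with hlt | hgt
    · have h1 : 0 < γ (u2 x) - γ (u1 x) := sub_pos.mpr (hγm hlt)
      have h2 : 0 < u2 x - u1 x := sub_pos.mpr hlt
      nlinarith
    · have h1 : γ (u2 x) - γ (u1 x) < 0 := sub_neg.mpr (hγm hgt)
      have h2 : u2 x - u1 x < 0 := sub_neg.mpr hgt
      nlinarith
  -- third test function: constant 1
  have hφ3sob : IntervalSobolev ℓ p (fun _ => (1:ℝ)) (fun _ => (0:ℝ)) := by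
    refine ⟨integrableOn_zero, ?_, ?_⟩
    · have : (fun _ : ℝ => |(0:ℝ)| ^ p) = fun _ => (0:ℝ) := by
        funext x
        rw [abs_zero, Real.zero_rpow (by linarith : p ≠ 0)]
      rw [this]
      exact integrableOn_zero
    · intro x hx
      simp
  have E1'' := hw1 _ _ hφ3sob
  have E2'' := hw2 _ _ hφ3sob
  simp only [mul_one, mul_zero, MeasureTheory.integral_zero] at E1'' E2''
  have hsame : ∫ x in Ioo (0:ℝ) ℓ, γ (u2 x) = ∫ x in Ioo (0:ℝ) ℓ, γ (u1 x) := by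
    apply setIntegral_congr_fun measurableSet_Ioo
    intro x hx
    dsimp only
    rw [hueq x hx]
  have : b1 = b2 := by linarith [E1'', E2'', hsame]
  linarith

end KeyLemma

/-- Lemma 3.1, point 1(i): monotone dependence of the solution of
(P^{γ,f}_{p,a,b+ε}) on ε, with strict growth at the right endpoint. Here `u ε` is the
C¹ representative of the solution `v_ε = γ ∘ u_ε`. -/
theorem neumann_perturbed_right_flux_monotone
    (ℓ : ℝ) (hℓ : 0 < ℓ) (p : ℝ) (hp : 1 < p)
    (γ : ℝ → ℝ) (hγc : Continuous γ) (hγm : StrictMono γ)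
    (hγs : Function.Surjective γ) (hγ0 : γ 0 = 0)
    (f : ℝ → ℝ) (hf : IntegrableOn f (Ioo 0 ℓ) volume) (a b : ℝ)
    (u u' : ℝ → ℝ → ℝ)
    (hsol : ∀ ε : ℝ,
      SolvesNeumann ℓ p γ f a (b + ε) (fun x => γ (u ε x)) (u ε) (u' ε))
    (hC1 : ∀ ε : ℝ, ContinuousOn (u' ε) (Icc 0 ℓ)) :
    (∀ ε : ℝ, 0 < ε → (∀ x ∈ Icc (0:ℝ) ℓ, u 0 x ≤ u ε x) ∧ u 0 ℓ < u ε ℓ) ∧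
    (∀ ε : ℝ, ε < 0 → (∀ x ∈ Icc (0:ℝ) ℓ, u ε x ≤ u 0 x) ∧ u ε ℓ < u 0 ℓ) := by
  constructor
  · intro ε hε
    exact neumann_compare ℓ p hℓ hp γ hγc hγm f a (b + 0) (b + ε) (by linarith)
      (u 0) (u' 0) (u ε) (u' ε) (hsol 0) (hsol ε) (hC1 0) (hC1 ε)
  · intro ε hε
    exact neumann_compare ℓ p hℓ hp γ hγc hγm f a (b + ε) (b + 0) (by linarith)
      (u ε) (u' ε) (u 0) (u' 0) (hsol ε) (hsol 0) (hC1 ε) (hC1 0)
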